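/- Let a < b be positive integers with b ≠ 2a, X = {a, b, a+b}, and G the associated Grundy sequence. If n is the least pile with G(n) = k, then G(n + a + b) = k. -/

import Mathlib

/-- The minimum excludant of a set of naturals. -/
noncomputable def mex (S : Set ℕ) : ℕ := sInf {m | m ∉ S}

/-- `G` is the Grundy (nim) sequence of the all-but subtraction game with
excluded set `X`: `G n = mex { G (n - t) : t > 0, t ∉ X, t ≤ n }`. -/
def IsGrundy (X : Set ℕ) (G : ℕ → ℕ) : Prop :=
  ∀ n, G n = mex {m | ∃ t, 0 < t ∧ t ∉ X ∧ t ≤ n ∧ G (n - t) = m}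

/-- The set of Grundy values reachable from `n`. -/
def SS (X : Set ℕ) (G : ℕ → ℕ) (n : ℕ) : Set ℕ :=
  {m | ∃ t, 0 < t ∧ t ∉ X ∧ t ≤ n ∧ G (n - t) = m}

lemma SS_compl_nonempty (X : Set ℕ) (G : ℕ → ℕ) (n : ℕ) :
    {m | m ∉ SS X G n}.Nonempty := by
  have hsub : SS X G n ⊆ G '' Set.Iic n := by
    rintro m ⟨t, ht0, htX, htn, hGt⟩
    exact ⟨n - t, Nat.sub_le n t, hGt⟩
  have hfin : (SS X G n).Finite := ((Set.finite_Iic n).image G).subset hsub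
  have : {m | m ∉ SS X G n} = (SS X G n)ᶜ := rfl
  rw [this]
  exact hfin.infinite_compl.nonempty

lemma mex_eq_of {S : Set ℕ} {x : ℕ} (hx : x ∉ S) (h : ∀ j < x, j ∈ S) :
    mex S = x := by
  refine le_antisymm (Nat.sInf_le hx) ?_
  by_contra hlt
  push_neg at hlt
  have hmem := Nat.sInf_mem (⟨x, hx⟩ : {m | m ∉ S}.Nonempty)
  exact hmem (h _ hlt)

lemma grundy_eq_mex {X : Set ℕ} {G : ℕ → ℕ} (hG : IsGrundy X G) (n : ℕ) :
    G n = mex (SS X G n) := hG n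

lemma grundy_not_mem {X : Set ℕ} {G : ℕ → ℕ} (hG : IsGrundy X G) (n : ℕ) :
    G n ∉ SS X G n := by
  rw [grundy_eq_mex hG]
  exact Nat.sInf_mem (SS_compl_nonempty X G n)

lemma grundy_lt_mem {X : Set ℕ} {G : ℕ → ℕ} (hG : IsGrundy X G) {n j : ℕ}
    (hj : j < G n) : j ∈ SS X G n := by
  by_contra h
  have := Nat.sInf_le (show j ∈ {m | m ∉ SS X G n} from h)
  rw [← mex, ← grundy_eq_mex hG] at this
  omega

lemma not_mem_X_of_gt {a b t : ℕ} (h : a + b < t) : t ∉ ({a, b, a + b} : Set ℕ) := by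
  simp only [Set.mem_insert_iff, Set.mem_singleton_iff]
  omega

/-- Every value is attained by the Grundy sequence. -/
lemma grundy_surjective {a b : ℕ} {G : ℕ → ℕ}
    (hG : IsGrundy {a, b, a + b} G) (k : ℕ) : ∃ n, G n = k := by
  induction k using Nat.strong_induction_on with
  | _ k ih =>
    -- choose witnesses for each j < k
    set f : ℕ → ℕ := fun j => sInf {i | G i = j} with hf
    have hfj : ∀ j < k, G (f j) = j := fun j hj =>
      Nat.sInf_mem (ih j hj)
    set N0 : ℕ := (Finset.range k).sup f + (a + b + 1) with hN0
    have hbig : k ≤ G N0 := by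
      by_contra h
      push_neg at h
      have hmem : G N0 ∈ SS {a, b, a + b} G N0 := by
        refine ⟨N0 - f (G N0), ?_, ?_, ?_, ?_⟩ <;>
          · have hle : f (G N0) ≤ (Finset.range k).sup f :=
              Finset.le_sup (Finset.mem_range.mpr h)
            first
            | omega
            | (apply not_mem_X_of_gt; omega)
            | (have : N0 - (N0 - f (G N0)) = f (G N0) := by omega
               rw [this]; exact hfj _ h)
      exact grundy_not_mem hG N0 hmem
    have hne : {N | k ≤ G N}.Nonempty := ⟨N0, hbig⟩
    set N : ℕ := sInf {N | k ≤ G N} with hN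
    have hkN : k ≤ G N := Nat.sInf_mem hne
    have hlt : ∀ m < N, G m < k := by
      intro m hm
      have := Nat.notMem_of_lt_sInf (by rw [← hN]; exact hm)
      simpa using this
    have hknot : k ∉ SS {a, b, a + b} G N := by
      rintro ⟨t, ht0, htX, htn, hGt⟩
      have : N - t < N := by omega
      have := hlt _ this
      omega
    have : G N ≤ k := by
      rw [grundy_eq_mex hG, mex]
      exact Nat.sInf_le hknot
    exact ⟨N, le_antisymm this hkN⟩

theorem stmt_17 (a b : ℕ) (ha : 0 < a) (hab : a < b) (hb : b ≠ 2 * a)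
    (G : ℕ → ℕ) (hG : IsGrundy {a, b, a + b} G) (k n : ℕ)
    (hn : n = sInf {i | G i = k}) :
    G (n + a + b) = k := by
  have hne : {i | G i = k}.Nonempty := grundy_surjective hG k
  have hGn : G n = k := by rw [hn]; exact Nat.sInf_mem hne
  have hmin : ∀ m, G m = k → n ≤ m := by
    intro m hm
    rw [hn]; exact Nat.sInf_le hm
  set N : ℕ := n + a + b with hNdef
  -- k is not reachable from N
  have hknot : k ∉ SS {a, b, a + b} G N := by
    rintro ⟨t, ht0, htX, htn, hGt⟩
    simp only [Set.mem_insert_iff, Set.mem_singleton_iff] at htX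
    push_neg at htX
    obtain ⟨hta, htb, htab⟩ := htX
    set m : ℕ := N - t with hm
    have hmk : G m = k := hGt
    have hnm : n ≤ m := hmin m hmk
    have hmN : m < N := by omega
    -- m ≠ n since t ≠ a + b
    have hmn : n < m := by omega
    -- from m we can reach n
    have hreach : (k : ℕ) ∈ SS {a, b, a + b} G m := by
      refine ⟨m - n, by omega, ?_, by omega, ?_⟩
      · simp only [Set.mem_insert_iff, Set.mem_singleton_iff]
        push_neg
        omega
      · have : m - (m - n) = n := by omega
        rw [this]; exact hGn
    rw [← hmk] at hreach
    exact grundy_not_mem hG m hreach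
  -- every j < k is reachable from N
  have hall : ∀ j < k, j ∈ SS {a, b, a + b} G N := by
    intro j hj
    have : j ∈ SS {a, b, a + b} G n := grundy_lt_mem hG (by omega)
    obtain ⟨t, ht0, htX, htn, hGt⟩ := this
    refine ⟨t + a + b, by omega, ?_, by omega, ?_⟩
    · simp only [Set.mem_insert_iff, Set.mem_singleton_iff] at htX ⊢
      omega
    · have : N - (t + a + b) = n - t := by omega
      rw [this]; exact hGt
  rw [grundy_eq_mex hG]
  exact mex_eq_of hknot hall
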